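/- Catenation upper bound: let L₁ and L₂ be suffix-free regular languages over an alphabet Σ with NSC(L₁) = m and NSC(L₂) = n. Then NSC(L₁·L₂) ≤ m + n − 1, i.e., there is an NFA with at most m + n − 1 states accepting the concatenation L₁·L₂. -/
import Mathlib


open Computability

/-- A nondeterministic finite automaton with a single start state and
no ε-transitions. -/
structure SNFA (α : Type) (σ : Type) where
  step : σ → α → Set σ
  start : σ
  accept : Set σ

namespace SNFA

variable {α σ : Type}

/-- The set of states reachable from some state in `S` by one transition on `a`. -/
def stepSet (M : SNFA α σ) (S : Set σ) (a : α) : Set σ :=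
  ⋃ s ∈ S, M.step s a

/-- The set of states reachable from the set `S` of states by reading the word `w`. -/
def evalFrom (M : SNFA α σ) (S : Set σ) (w : List α) : Set σ :=
  w.foldl M.stepSet S

/-- The language accepted by `M`: all words spelled out by a path
from the start state to an accepting state. -/
def accepts (M : SNFA α σ) : Language α :=
  {w | ∃ q ∈ M.accept, q ∈ M.evalFrom {M.start} w}

end SNFA

/-- A language is suffix-free if no word of the language is a proper suffix
of another word of the language. -/
def SuffixFree {α : Type} (L : Language α) : Prop :=
  ∀ u v : List α, u ∈ L → v ∈ L → u <:+ v → u = v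

/-- `NSCle L k`: there is an NFA with at most `k` states accepting `L`
(so the nondeterministic state complexity of `L` is at most `k`). -/
def NSCle {α : Type} (L : Language α) (k : ℕ) : Prop :=
  ∃ (σ : Type) (x : Fintype σ) (M : SNFA α σ), M.accepts = L ∧ @Fintype.card σ x ≤ k

/-- `NSCge L k`: every NFA accepting `L` has at least `k` states
(so the nondeterministic state complexity of `L` is at least `k`). -/
def NSCge {α : Type} (L : Language α) (k : ℕ) : Prop :=
  ∀ (σ : Type) [Fintype σ] (M : SNFA α σ), M.accepts = L → k ≤ Fintype.card σ

/-- `NSCeq L m`: the nondeterministic state complexity of `L` is exactly `m`: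
some NFA with `m` states accepts `L` and every NFA accepting `L` has at least
`m` states. -/
def NSCeq {α : Type} (L : Language α) (m : ℕ) : Prop :=
  NSCle L m ∧ NSCge L m

namespace SNFA

variable {α σ σ₁ σ₂ : Type}

theorem mem_stepSet {M : SNFA α σ} {S : Set σ} {a : α} {s : σ} :
    s ∈ M.stepSet S a ↔ ∃ t ∈ S, s ∈ M.step t a := by
  simp [stepSet]

theorem evalFrom_nil (M : SNFA α σ) (S : Set σ) : M.evalFrom S [] = S := rfl

theorem evalFrom_cons (M : SNFA α σ) (S : Set σ) (a : α) (w : List α) :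
    M.evalFrom S (a :: w) = M.evalFrom (M.stepSet S a) w := rfl

theorem evalFrom_append_singleton (M : SNFA α σ) (S : Set σ) (w : List α) (a : α) :
    M.evalFrom S (w ++ [a]) = M.stepSet (M.evalFrom S w) a := by
  simp [evalFrom, List.foldl_append]

/-- Remove all transitions into the start state. -/
def prune (M : SNFA α σ) : SNFA α σ where
  step q a := M.step q a \ {M.start}
  start := M.start
  accept := M.accept

theorem prune_nonreturning (M : SNFA α σ) :
    ∀ q a, (M.prune).start ∉ (M.prune).step q a := by
  intro q a h
  exact h.2 rfl

theorem prune_evalFrom_subset (M : SNFA α σ) :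
    ∀ (w : List α) (S T : Set σ), S ⊆ T →
      (M.prune).evalFrom S w ⊆ M.evalFrom T w := by
  intro w
  induction w with
  | nil => intro S T h; exact h
  | cons a w ih =>
    intro S T h
    rw [evalFrom_cons, evalFrom_cons]
    apply ih
    intro x hx
    rw [mem_stepSet] at hx ⊢
    obtain ⟨t, ht, hx⟩ := hx
    exact ⟨t, h ht, hx.1⟩

theorem evalFrom_not_start (M : SNFA α σ) (h : ∀ q a, M.start ∉ M.step q a) :
    ∀ (w : List α) (S : Set σ), M.start ∉ S → M.start ∉ M.evalFrom S w := by
  intro w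
  induction w with
  | nil => intro S hS; exact hS
  | cons a w ih =>
    intro S hS
    rw [evalFrom_cons]
    apply ih
    intro hx
    rw [mem_stepSet] at hx
    obtain ⟨t, _, hx⟩ := hx
    exact h t a hx

theorem ne_start_of_mem_evalFrom (M : SNFA α σ) (h : ∀ q a, M.start ∉ M.step q a)
    {w : List α} (hw : w ≠ []) {q : σ} (hq : q ∈ M.evalFrom {M.start} w) :
    q ≠ M.start := by
  cases w with
  | nil => exact absurd rfl hw
  | cons a w =>
    rintro rfl
    rw [evalFrom_cons] at hq
    refine evalFrom_not_start M h w _ ?_ hq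
    intro hx
    rw [mem_stepSet] at hx
    obtain ⟨t, _, hx⟩ := hx
    exact h t a hx

theorem prune_suffix (M : SNFA α σ) :
    ∀ (w : List α) (q : σ), q ∈ M.evalFrom {M.start} w →
      ∃ v, v <:+ w ∧ q ∈ (M.prune).evalFrom {M.start} v := by
  intro w
  induction w using List.reverseRecOn with
  | nil => intro q hq; exact ⟨[], List.nil_suffix, hq⟩
  | append_singleton u a ih =>
    intro q hq
    rw [evalFrom_append_singleton, mem_stepSet] at hq
    obtain ⟨p, hp, hq⟩ := hq
    obtain ⟨v, hv, hpv⟩ := ih p hp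
    by_cases hqs : q = M.start
    · subst hqs
      exact ⟨[], List.nil_suffix, rfl⟩
    · obtain ⟨t, rfl⟩ := hv
      refine ⟨v ++ [a], ⟨t, by simp⟩, ?_⟩
      rw [evalFrom_append_singleton, mem_stepSet]
      exact ⟨p, hpv, hq, hqs⟩

theorem prune_accepts (M : SNFA α σ) (hsf : SuffixFree M.accepts) :
    (M.prune).accepts = M.accepts := by
  ext w
  constructor
  · rintro ⟨q, hq, hqe⟩
    exact ⟨q, hq, prune_evalFrom_subset M w _ _ (subset_refl _) hqe⟩
  · rintro ⟨q, hq, hqe⟩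
    obtain ⟨v, hv, hqv⟩ := prune_suffix M w q hqe
    have hvL : v ∈ M.accepts :=
      ⟨q, hq, prune_evalFrom_subset M v _ _ (subset_refl _) hqv⟩
    have hvw := hsf v w hvL ⟨q, hq, hqe⟩ hv
    subst hvw
    exact ⟨q, hq, hqv⟩


/-- The concatenation automaton: states of `M₁` plus non-start states of `M₂`. -/
def concatM (M₁ : SNFA α σ₁) (M₂ : SNFA α σ₂) :
    SNFA α (σ₁ ⊕ {q : σ₂ // q ≠ M₂.start}) where
  step s a :=
    match s with
    | Sum.inl p =>
        {t | (∃ p', p' ∈ M₁.step p a ∧ t = Sum.inl p') ∨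
             (p ∈ M₁.accept ∧
               ∃ q : {q : σ₂ // q ≠ M₂.start}, q.1 ∈ M₂.step M₂.start a ∧ t = Sum.inr q)}
    | Sum.inr q =>
        {t | ∃ r : {q : σ₂ // q ≠ M₂.start}, r.1 ∈ M₂.step q.1 a ∧ t = Sum.inr r}
  start := Sum.inl M₁.start
  accept :=
    {t | (∃ q : {q : σ₂ // q ≠ M₂.start}, q.1 ∈ M₂.accept ∧ t = Sum.inr q) ∨
         ([] ∈ M₂.accepts ∧ ∃ p, p ∈ M₁.accept ∧ t = Sum.inl p)}

theorem concat_inl (M₁ : SNFA α σ₁) (M₂ : SNFA α σ₂) :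
    ∀ (w : List α) (p : σ₁),
      Sum.inl p ∈ (concatM M₁ M₂).evalFrom {Sum.inl M₁.start} w ↔
        p ∈ M₁.evalFrom {M₁.start} w := by
  intro w
  induction w using List.reverseRecOn with
  | nil => intro p; simp [evalFrom_nil]
  | append_singleton u a ih =>
    intro p
    rw [evalFrom_append_singleton, evalFrom_append_singleton, mem_stepSet, mem_stepSet]
    constructor
    · rintro ⟨t, ht, hstep⟩
      match t with
      | Sum.inl p' =>
        rcases hstep with ⟨p'', hp'', heq⟩ | ⟨-, q, -, heq⟩
        · cases heq
          exact ⟨p', (ih p').mp ht, hp''⟩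
        · exact absurd heq (by simp)
      | Sum.inr r =>
        obtain ⟨r', -, heq⟩ := hstep
        exact absurd heq (by simp)
    · rintro ⟨p', hp', hstep⟩
      exact ⟨Sum.inl p', (ih p').mpr hp', Or.inl ⟨p, hstep, rfl⟩⟩

theorem concat_inr (M₁ : SNFA α σ₁) (M₂ : SNFA α σ₂)
    (hnr : ∀ q a, M₂.start ∉ M₂.step q a) :
    ∀ (w : List α) (q : {q : σ₂ // q ≠ M₂.start}),
      Sum.inr q ∈ (concatM M₁ M₂).evalFrom {Sum.inl M₁.start} w ↔
        ∃ u v, w = u ++ v ∧ v ≠ [] ∧ u ∈ M₁.accepts ∧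
          q.1 ∈ M₂.evalFrom {M₂.start} v := by
  intro w
  induction w using List.reverseRecOn with
  | nil =>
    intro q
    simp only [evalFrom_nil, Set.mem_singleton_iff]
    constructor
    · intro h; exact absurd h (by simp)
    · rintro ⟨u, v, huv, hv, -, -⟩
      have h2 := huv.symm
      simp only [List.append_eq_nil_iff] at h2
      exact (hv h2.2).elim
  | append_singleton u a ih =>
    intro q
    rw [evalFrom_append_singleton, mem_stepSet]
    constructor
    · rintro ⟨t, ht, hstep⟩
      match t with
      | Sum.inl p =>
        rcases hstep with ⟨p'', -, heq⟩ | ⟨hacc, q', hq', heq⟩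
        · exact absurd heq (by simp)
        · have hqq : q' = q := by
            simpa using heq.symm
          subst hqq
          refine ⟨u, [a], by simp, by simp, ⟨p, hacc, (concat_inl M₁ M₂ u p).mp ht⟩, ?_⟩
          have : M₂.evalFrom {M₂.start} [a] = M₂.stepSet {M₂.start} a := rfl
          rw [this, mem_stepSet]
          exact ⟨M₂.start, rfl, hq'⟩
      | Sum.inr r =>
        obtain ⟨r', hr', heq⟩ := hstep
        have hqq : r' = q := by simpa using heq.symm
        subst hqq
        obtain ⟨u', v', huv, hv', hu', hrv⟩ := (ih r).mp ht
        refine ⟨u', v' ++ [a], by simp [huv], by simp, hu', ?_⟩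
        rw [evalFrom_append_singleton, mem_stepSet]
        exact ⟨r.1, hrv, hr'⟩
    · rintro ⟨u', v', huv, hv', hu', hqv⟩
      rcases v'.eq_nil_or_concat with rfl | ⟨v'', b, rfl⟩
      · exact absurd rfl hv'
      · rw [List.concat_eq_append] at huv hqv
        rw [← List.append_assoc] at huv
        obtain ⟨hu, hab⟩ := List.append_inj' huv rfl
        have hb : b = a := by simpa using hab.symm
        subst hb
        rw [evalFrom_append_singleton, mem_stepSet] at hqv
        obtain ⟨r₂, hr₂, hq⟩ := hqv
        rcases eq_or_ne v'' [] with rfl | hne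
        · -- jump from M₁ part
          obtain ⟨p, hp, hpe⟩ := hu'
          have hps : r₂ = M₂.start := by
            simpa [evalFrom_nil] using hr₂
          subst hps
          have hu2 : u = u' := by simpa using hu
          refine ⟨Sum.inl p, (concat_inl M₁ M₂ u p).mpr (hu2 ▸ hpe), ?_⟩
          exact Or.inr ⟨hp, q, hq, rfl⟩
        · have hr₂ne : r₂ ≠ M₂.start := ne_start_of_mem_evalFrom M₂ hnr hne hr₂
          refine ⟨Sum.inr ⟨r₂, hr₂ne⟩, (ih ⟨r₂, hr₂ne⟩).mpr ⟨u', v'', hu, hne, hu', hr₂⟩, ?_⟩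
          exact ⟨q, hq, rfl⟩

theorem concat_accepts (M₁ : SNFA α σ₁) (M₂ : SNFA α σ₂)
    (hnr : ∀ q a, M₂.start ∉ M₂.step q a) :
    (concatM M₁ M₂).accepts = M₁.accepts * M₂.accepts := by
  ext w
  rw [Language.mem_mul]
  constructor
  · rintro ⟨t, ht, hte⟩
    rcases ht with ⟨q, hq, rfl⟩ | ⟨hε, p, hp, rfl⟩
    · obtain ⟨u, v, rfl, -, hu, hqv⟩ := (concat_inr M₁ M₂ hnr w q).mp hte
      exact ⟨u, hu, v, ⟨q.1, hq, hqv⟩, rfl⟩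
    · exact ⟨w, ⟨p, hp, (concat_inl M₁ M₂ w p).mp hte⟩, [], hε, List.append_nil w⟩
  · rintro ⟨u, hu, v, hv, rfl⟩
    rcases eq_or_ne v [] with rfl | hne
    · obtain ⟨p, hp, hpe⟩ := hu
      refine ⟨Sum.inl p, Or.inr ⟨hv, p, hp, rfl⟩, ?_⟩
      rw [List.append_nil]
      exact (concat_inl M₁ M₂ u p).mpr hpe
    · obtain ⟨q₂, hq₂, hq₂e⟩ := hv
      have hq₂ne : q₂ ≠ M₂.start := ne_start_of_mem_evalFrom M₂ hnr hne hq₂e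
      refine ⟨Sum.inr ⟨q₂, hq₂ne⟩, Or.inl ⟨⟨q₂, hq₂ne⟩, hq₂, rfl⟩, ?_⟩
      exact (concat_inr M₁ M₂ hnr _ ⟨q₂, hq₂ne⟩).mpr ⟨u, v, rfl, hne, hu, hq₂e⟩

end SNFA


/-- **Catenation, upper bound.** If `L₁` and `L₂` are suffix-free regular
languages with nondeterministic state complexities `m` and `n`, then some NFA
with at most `m + n - 1` states accepts the concatenation `L₁ * L₂`. -/
theorem catenation_upper {α : Type} (L₁ L₂ : Language α) (m n : ℕ)
    (hsf₁ : SuffixFree L₁) (hsf₂ : SuffixFree L₂)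
    (hm : NSCeq L₁ m) (hn : NSCeq L₂ n) :
    NSCle (L₁ * L₂) (m + n - 1) := by
  obtain ⟨⟨σ₁, x₁, M₁, hM₁, hc₁⟩, -⟩ := hm
  obtain ⟨⟨σ₂, x₂, M₂, hM₂, hc₂⟩, -⟩ := hn
  letI := x₁
  letI := x₂
  letI : DecidableEq σ₂ := Classical.decEq σ₂
  have hn1 : 1 ≤ Fintype.card σ₂ := @Fintype.card_pos σ₂ x₂ ⟨M₂.start⟩
  have hsfM : SuffixFree M₂.accepts := hM₂ ▸ hsf₂
  have hPacc : (M₂.prune).accepts = L₂ := by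
    rw [SNFA.prune_accepts M₂ hsfM, hM₂]
  have hnr := SNFA.prune_nonreturning M₂
  refine ⟨σ₁ ⊕ {q : σ₂ // q ≠ (M₂.prune).start}, inferInstance,
    SNFA.concatM M₁ M₂.prune, ?_, ?_⟩
  · rw [SNFA.concat_accepts M₁ M₂.prune hnr, hM₁, hPacc]
  · rw [Fintype.card_sum]
    have hlt : Fintype.card {q : σ₂ // q ≠ (M₂.prune).start} < Fintype.card σ₂ :=
      Fintype.card_subtype_lt (x := (M₂.prune).start) (by simp)
    omega
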